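/- Quantitative implicit function theorem: Let n, m ≥ 1, let (x₀,y₀) ∈ ℝⁿ × ℝᵐ, let U ⊆ ℝⁿ × ℝᵐ be an open neighborhood of (x₀,y₀), and let F : U → ℝᵐ be continuously differentiable with F(x₀,y₀) = 0. Assume: (i) the partial Fréchet derivative D_yF(x₀,y₀) : ℝᵐ → ℝᵐ is invertible, and set S := ‖(D_yF(x₀,y₀))⁻¹‖; (ii) ρ > 0 is such that the closed set B̄(x₀,ρ) × B̄(y₀,ρ) is contained in U and ‖Id − (D_yF(x₀,y₀))⁻¹ ∘ D_yF(x,y)‖ ≤ 1/2 for all (x,y) ∈ B(x₀,ρ) × B(y₀,ρ); (iii) N := sup{‖D_xF(x,y)‖ : (x,y) ∈ B(x₀,ρ) × B(y₀,ρ)} is finite and positive. Then, setting r := min{ρ/(2SN), ρ/2}, there exists a unique function f : B(x₀,r) → B̄(y₀,ρ) such that f(x₀) = y₀ and, for every x ∈ B(x₀,r) and every y ∈ B̄(y₀,ρ), F(x,y) = 0 if and only if y = f(x). -/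

import Mathlib

open Metric Filter Topology

lemma lip_closure {E F' : Type*} [NormedAddCommGroup E] [NormedSpace ℝ E]
    [NormedAddCommGroup F'] {f : E → F'} {c : E} {ρ C : ℝ} (hρ : 0 < ρ) (hC : 0 ≤ C)
    (hcont : ContinuousOn f (closedBall c ρ))
    (h : ∀ y₁ ∈ ball c ρ, ∀ y₂ ∈ ball c ρ, ‖f y₁ - f y₂‖ ≤ C * ‖y₁ - y₂‖)
    {y₁ y₂ : E} (hy₁ : y₁ ∈ closedBall c ρ) (hy₂ : y₂ ∈ closedBall c ρ) :
    ‖f y₁ - f y₂‖ ≤ C * ‖y₁ - y₂‖ := by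
  set φ : ℝ → E → E := fun t y => c + t • (y - c) with hφ
  have hmemφ : ∀ t ∈ Set.Ico (0:ℝ) 1, ∀ y ∈ closedBall c ρ, φ t y ∈ ball c ρ := by
    intro t ht y hy
    rw [mem_closedBall, dist_eq_norm] at hy
    rw [mem_ball, dist_eq_norm]
    have : ‖φ t y - c‖ = |t| * ‖y - c‖ := by
      simp [hφ, norm_smul, Real.norm_eq_abs]
    rw [this, abs_of_nonneg ht.1]
    nlinarith [ht.1, ht.2, norm_nonneg (y - c)]
  have hdiff : ∀ t : ℝ, φ t y₁ - φ t y₂ = t • (y₁ - y₂) := by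
    intro t
    simp only [hφ, add_sub_add_left_eq_sub, ← smul_sub, sub_sub_sub_cancel_right]
  have key : ∀ t ∈ Set.Ico (0:ℝ) 1, ‖f (φ t y₁) - f (φ t y₂)‖ ≤ C * ‖y₁ - y₂‖ := by
    intro t ht
    have h1 := h _ (hmemφ t ht y₁ hy₁) _ (hmemφ t ht y₂ hy₂)
    have h2 : ‖φ t y₁ - φ t y₂‖ = t * ‖y₁ - y₂‖ := by
      rw [hdiff, norm_smul, Real.norm_eq_abs, abs_of_nonneg ht.1]
    rw [h2] at h1
    nlinarith [mul_nonneg (mul_nonneg hC (norm_nonneg (y₁ - y₂))) (sub_nonneg.2 ht.2.le)]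
  have hIoo : Set.Ioo (0:ℝ) 1 ∈ 𝓝[<] (1:ℝ) :=
    Ioo_mem_nhdsLT_of_mem ⟨zero_lt_one, le_rfl⟩
  have htendφ : ∀ y ∈ closedBall c ρ,
      Tendsto (fun t => f (φ t y)) (𝓝[<] (1:ℝ)) (𝓝 (f y)) := by
    intro y hy
    have h1 : Tendsto (fun t => φ t y) (𝓝[<] (1:ℝ)) (𝓝[closedBall c ρ] y) := by
      rw [tendsto_nhdsWithin_iff]
      constructor
      · have : Tendsto (fun t : ℝ => φ t y) (𝓝 1) (𝓝 (φ 1 y)) := by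
          apply Continuous.tendsto
          exact continuous_const.add (continuous_id.smul continuous_const)
        have h1y : φ 1 y = y := by simp [hφ]
        rw [h1y] at this
        exact this.mono_left nhdsWithin_le_nhds
      · filter_upwards [hIoo] with t ht
        exact ball_subset_closedBall (hmemφ t ⟨ht.1.le, ht.2⟩ y hy)
    exact (hcont y hy).tendsto.comp h1
  have hlim : Tendsto (fun t => ‖f (φ t y₁) - f (φ t y₂)‖) (𝓝[<] (1:ℝ))
      (𝓝 ‖f y₁ - f y₂‖) :=
    ((htendφ y₁ hy₁).sub (htendφ y₂ hy₂)).norm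
  exact le_of_tendsto hlim (by filter_upwards [hIoo] with t ht using key t ⟨ht.1.le, ht.2⟩)

/-- **Quantitative implicit function theorem** (Theorem `thm:ImplicitFunction`): the radius of
the domain of the implicit function depends only on `ρ`, `S = ‖(D_yF(x₀,y₀))⁻¹‖` and the bound
`N` on `‖D_xF‖`. -/
theorem stmt2 (n m : ℕ) (hn : 1 ≤ n) (hm : 1 ≤ m)
    (x₀ : EuclideanSpace ℝ (Fin n)) (y₀ : EuclideanSpace ℝ (Fin m))
    (U : Set (EuclideanSpace ℝ (Fin n) × EuclideanSpace ℝ (Fin m)))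
    (hU : IsOpen U) (hmem : (x₀, y₀) ∈ U)
    (F : EuclideanSpace ℝ (Fin n) × EuclideanSpace ℝ (Fin m) → EuclideanSpace ℝ (Fin m))
    (hF : ContDiffOn ℝ 1 F U) (hF0 : F (x₀, y₀) = 0)
    -- (i) invertibility of the partial derivative in `y` at `(x₀, y₀)`, and `S` its inverse norm
    (A : EuclideanSpace ℝ (Fin m) ≃L[ℝ] EuclideanSpace ℝ (Fin m))
    (hA : (A : EuclideanSpace ℝ (Fin m) →L[ℝ] EuclideanSpace ℝ (Fin m))
        = fderiv ℝ (fun y => F (x₀, y)) y₀)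
    (S : ℝ)
    (hS : S = ‖(A.symm : EuclideanSpace ℝ (Fin m) →L[ℝ] EuclideanSpace ℝ (Fin m))‖)
    -- (ii) the quantitative contraction bound on the product of balls of radius `ρ`
    (ρ : ℝ) (hρ : 0 < ρ)
    (hsub : closedBall x₀ ρ ×ˢ closedBall y₀ ρ ⊆ U)
    (hhalf : ∀ x ∈ ball x₀ ρ, ∀ y ∈ ball y₀ ρ,
      ‖ContinuousLinearMap.id ℝ (EuclideanSpace ℝ (Fin m)) -
        (A.symm : EuclideanSpace ℝ (Fin m) →L[ℝ] EuclideanSpace ℝ (Fin m)).comp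
          (fderiv ℝ (fun y' => F (x, y')) y)‖ ≤ 1 / 2)
    -- (iii) `N` is the (finite, positive) supremum of `‖D_xF‖` on the product of balls
    (N : ℝ) (hNpos : 0 < N)
    (hN : N = sSup {c : ℝ | ∃ x ∈ ball x₀ ρ, ∃ y ∈ ball y₀ ρ,
      c = ‖fderiv ℝ (fun x' => F (x', y)) x‖})
    -- the radius of the domain of the implicit function
    (r : ℝ) (hr : r = min (ρ / (2 * S * N)) (ρ / 2)) :
    ∃ f : EuclideanSpace ℝ (Fin n) → EuclideanSpace ℝ (Fin m),
      (f x₀ = y₀ ∧ (∀ x ∈ ball x₀ r, f x ∈ closedBall y₀ ρ) ∧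
        ∀ x ∈ ball x₀ r, ∀ y ∈ closedBall y₀ ρ, (F (x, y) = 0 ↔ y = f x)) ∧
      ∀ g : EuclideanSpace ℝ (Fin n) → EuclideanSpace ℝ (Fin m),
        (g x₀ = y₀ ∧ (∀ x ∈ ball x₀ r, g x ∈ closedBall y₀ ρ) ∧
          ∀ x ∈ ball x₀ r, ∀ y ∈ closedBall y₀ ρ, (F (x, y) = 0 ↔ y = g x)) →
        ∀ x ∈ ball x₀ r, g x = f x := by
  classical
  -- `S > 0`
  have hSpos : 0 < S := by
    rw [hS, norm_pos_iff]
    intro h0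
    have hv : ‖EuclideanSpace.single (⟨0, hm⟩ : Fin m) (1:ℝ)‖ = 1 := by
      rw [EuclideanSpace.norm_single]; norm_num
    have h2 : A.symm (A (EuclideanSpace.single (⟨0, hm⟩ : Fin m) (1:ℝ))) = 0 := by
      have : (A.symm : EuclideanSpace ℝ (Fin m) →L[ℝ] EuclideanSpace ℝ (Fin m))
          (A (EuclideanSpace.single (⟨0, hm⟩ : Fin m) (1:ℝ))) = 0 := by rw [h0]; rfl
      simpa using this
    rw [A.symm_apply_apply] at h2
    rw [h2] at hv
    simp at hv
  have hrpos : 0 < r := by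
    rw [hr]; exact lt_min (by positivity) (by positivity)
  have hrle2 : r ≤ ρ / 2 := hr ▸ min_le_right _ _
  have hrleSN : r ≤ ρ / (2 * S * N) := hr ▸ min_le_left _ _
  have hballsub : ball x₀ r ⊆ ball x₀ ρ := ball_subset_ball (by linarith)
  -- differentiability on the compact product
  have hdiffU : ∀ p ∈ closedBall x₀ ρ ×ˢ closedBall y₀ ρ, DifferentiableAt ℝ F p :=
    fun p hp => (hF.contDiffAt (hU.mem_nhds (hsub hp))).differentiableAt one_ne_zero
  -- partial derivative in x
  have hLx : ∀ (x : EuclideanSpace ℝ (Fin n)) (y : EuclideanSpace ℝ (Fin m)),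
      (x, y) ∈ closedBall x₀ ρ ×ˢ closedBall y₀ ρ →
      HasFDerivAt (fun x' => F (x', y))
        ((fderiv ℝ F (x, y)).comp
          ((ContinuousLinearMap.id ℝ (EuclideanSpace ℝ (Fin n))).prod 0)) x := by
    intro x y hmemp
    have h1 : HasFDerivAt (fun x' : EuclideanSpace ℝ (Fin n) => (x', y))
        ((ContinuousLinearMap.id ℝ (EuclideanSpace ℝ (Fin n))).prod 0) x :=
      (hasFDerivAt_id x).prodMk (hasFDerivAt_const y x)
    exact ((hdiffU _ hmemp).hasFDerivAt).comp x h1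
  have hcompnorm : ∀ (L : EuclideanSpace ℝ (Fin n) × EuclideanSpace ℝ (Fin m) →L[ℝ]
      EuclideanSpace ℝ (Fin m)),
      ‖L.comp ((ContinuousLinearMap.id ℝ (EuclideanSpace ℝ (Fin n))).prod 0)‖ ≤ ‖L‖ := by
    intro L
    refine ContinuousLinearMap.opNorm_le_bound _ (norm_nonneg L) fun v => ?_
    have h1 : (L.comp ((ContinuousLinearMap.id ℝ (EuclideanSpace ℝ (Fin n))).prod 0)) v
        = L (v, 0) := rfl
    rw [h1]
    calc ‖L (v, 0)‖ ≤ ‖L‖ * ‖((v, 0) : EuclideanSpace ℝ (Fin n) × EuclideanSpace ℝ (Fin m))‖ :=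
          L.le_opNorm _
      _ = ‖L‖ * ‖v‖ := by
          rw [Prod.norm_def]
          simp [max_eq_left (norm_nonneg v)]
  -- the sup set is bounded above
  have hK : IsCompact (closedBall x₀ ρ ×ˢ closedBall y₀ ρ) :=
    (isCompact_closedBall _ _).prod (isCompact_closedBall _ _)
  have hcontfd : ContinuousOn (fun p => fderiv ℝ F p) (closedBall x₀ ρ ×ˢ closedBall y₀ ρ) :=
    (hF.continuousOn_fderiv_of_isOpen hU le_rfl).mono hsub
  obtain ⟨M, hM⟩ := hK.exists_bound_of_continuousOn hcontfd
  have hbdd : BddAbove {c : ℝ | ∃ x ∈ ball x₀ ρ, ∃ y ∈ ball y₀ ρ,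
      c = ‖fderiv ℝ (fun x' => F (x', y)) x‖} := by
    refine ⟨M, fun c hc => ?_⟩
    obtain ⟨x, hx, y, hy, rfl⟩ := hc
    have hmemp : (x, y) ∈ closedBall x₀ ρ ×ˢ closedBall y₀ ρ :=
      ⟨ball_subset_closedBall hx, ball_subset_closedBall hy⟩
    rw [(hLx x y hmemp).fderiv]
    exact le_trans (hcompnorm _) (hM _ hmemp)
  have hNbound : ∀ x ∈ ball x₀ ρ, ∀ y ∈ ball y₀ ρ,
      ‖fderiv ℝ (fun x' => F (x', y)) x‖ ≤ N :=
    fun x hx y hy => hN ▸ le_csSup hbdd ⟨x, hx, y, hy, rfl⟩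
  -- mean value estimate in `x`
  have hFx : ∀ x ∈ ball x₀ ρ, ‖F (x, y₀)‖ ≤ N * ‖x - x₀‖ := by
    intro x hx
    have h1 := Convex.norm_image_sub_le_of_norm_fderiv_le
      (f := fun x' => F (x', y₀)) (s := ball x₀ ρ)
      (fun x' hx' => (hLx x' y₀
        ⟨ball_subset_closedBall hx', mem_closedBall_self hρ.le⟩).differentiableAt)
      (fun x' hx' => hNbound x' hx' y₀ (mem_ball_self hρ))
      (convex_ball x₀ ρ) (mem_ball_self hρ) hx
    simpa [hF0] using h1
  -- key step : unique zero in the closed ball for each x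
  have key : ∀ x ∈ ball x₀ r, ∃ y, y ∈ closedBall y₀ ρ ∧ F (x, y) = 0 ∧
      ∀ y' ∈ closedBall y₀ ρ, F (x, y') = 0 → y' = y := by
    intro x hx
    have hxρ : x ∈ ball x₀ ρ := hballsub hx
    have hxc : x ∈ closedBall x₀ ρ := ball_subset_closedBall hxρ
    set Φ : EuclideanSpace ℝ (Fin m) → EuclideanSpace ℝ (Fin m) :=
      fun y => y - A.symm (F (x, y)) with hΦdef
    have hΦder : ∀ y ∈ closedBall y₀ ρ, HasFDerivAt Φ
        (ContinuousLinearMap.id ℝ (EuclideanSpace ℝ (Fin m)) -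
          (A.symm : EuclideanSpace ℝ (Fin m) →L[ℝ] EuclideanSpace ℝ (Fin m)).comp
            (fderiv ℝ (fun y' => F (x, y')) y)) y := by
      intro y hy
      have h1 : HasFDerivAt (fun y' : EuclideanSpace ℝ (Fin m) => ((x, y') :
          EuclideanSpace ℝ (Fin n) × EuclideanSpace ℝ (Fin m)))
          ((0 : EuclideanSpace ℝ (Fin m) →L[ℝ] EuclideanSpace ℝ (Fin n)).prod
            (ContinuousLinearMap.id ℝ (EuclideanSpace ℝ (Fin m)))) y :=
        (hasFDerivAt_const x y).prodMk (hasFDerivAt_id y)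
      have hdF : DifferentiableAt ℝ (fun y' => F (x, y')) y :=
        (((hdiffU (x, y) ⟨hxc, hy⟩).hasFDerivAt).comp y h1).differentiableAt
      have h2 : HasFDerivAt (fun y' => A.symm (F (x, y')))
          ((A.symm : EuclideanSpace ℝ (Fin m) →L[ℝ] EuclideanSpace ℝ (Fin m)).comp
            (fderiv ℝ (fun y' => F (x, y')) y)) y :=
        ((A.symm : EuclideanSpace ℝ (Fin m) →L[ℝ]
          EuclideanSpace ℝ (Fin m)).hasFDerivAt).comp y hdF.hasFDerivAt
      exact (hasFDerivAt_id y).sub h2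
    have hlip_open : ∀ y₁ ∈ ball y₀ ρ, ∀ y₂ ∈ ball y₀ ρ,
        ‖Φ y₁ - Φ y₂‖ ≤ (1/2 : ℝ) * ‖y₁ - y₂‖ := by
      intro y₁ hy₁ y₂ hy₂
      exact Convex.norm_image_sub_le_of_norm_fderiv_le
        (fun y hy => (hΦder y (ball_subset_closedBall hy)).differentiableAt)
        (fun y hy => by rw [(hΦder y (ball_subset_closedBall hy)).fderiv]
                        exact hhalf x hxρ y hy)
        (convex_ball y₀ ρ) hy₂ hy₁
    have hΦcont : ContinuousOn Φ (closedBall y₀ ρ) := by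
      have hFc : ContinuousOn (F ∘ (fun y : EuclideanSpace ℝ (Fin m) => (x, y)))
          (closedBall y₀ ρ) :=
        hF.continuousOn.comp (continuous_const.prodMk continuous_id).continuousOn
          (fun y hy => hsub ⟨hxc, hy⟩)
      exact continuousOn_id.sub (A.symm.continuous.comp_continuousOn hFc)
    have hlip : ∀ y₁ ∈ closedBall y₀ ρ, ∀ y₂ ∈ closedBall y₀ ρ,
        ‖Φ y₁ - Φ y₂‖ ≤ (1/2 : ℝ) * ‖y₁ - y₂‖ :=
      fun y₁ h1 y₂ h2 => lip_closure hρ (by norm_num) hΦcont hlip_open h1 h2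
    have hFxb : ‖F (x, y₀)‖ ≤ ρ / (2 * S) := by
      have h1 := hFx x hxρ
      have h2 : ‖x - x₀‖ ≤ r := by
        rw [mem_ball, dist_eq_norm] at hx; exact hx.le
      have h3 : N * ‖x - x₀‖ ≤ N * r := mul_le_mul_of_nonneg_left h2 hNpos.le
      have h4 : N * r ≤ ρ / (2 * S) :=
        calc N * r ≤ N * (ρ / (2 * S * N)) := mul_le_mul_of_nonneg_left hrleSN hNpos.le
          _ = ρ / (2 * S) := by field_simp
      linarith
    have hmaps : Set.MapsTo Φ (closedBall y₀ ρ) (closedBall y₀ ρ) := by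
      intro y hy
      rw [mem_closedBall, dist_eq_norm]
      have h1 : ‖Φ y - Φ y₀‖ ≤ (1/2 : ℝ) * ‖y - y₀‖ :=
        hlip y hy y₀ (mem_closedBall_self hρ.le)
      have h2 : ‖Φ y₀ - y₀‖ ≤ ρ / 2 := by
        have he : Φ y₀ - y₀ = -(A.symm (F (x, y₀))) := by simp [hΦdef]
        rw [he, norm_neg]
        calc ‖A.symm (F (x, y₀))‖ ≤ S * ‖F (x, y₀)‖ := by
              rw [hS]
              exact (A.symm : EuclideanSpace ℝ (Fin m) →L[ℝ]
                EuclideanSpace ℝ (Fin m)).le_opNorm _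
          _ ≤ S * (ρ / (2 * S)) := mul_le_mul_of_nonneg_left hFxb hSpos.le
          _ = ρ / 2 := by field_simp
      have h3 : ‖y - y₀‖ ≤ ρ := by rw [mem_closedBall, dist_eq_norm] at hy; exact hy
      calc ‖Φ y - y₀‖ = ‖(Φ y - Φ y₀) + (Φ y₀ - y₀)‖ := by rw [sub_add_sub_cancel]
        _ ≤ ‖Φ y - Φ y₀‖ + ‖Φ y₀ - y₀‖ := norm_add_le _ _
        _ ≤ ρ := by linarith
    haveI : CompleteSpace (closedBall y₀ ρ) := (isClosed_closedBall).completeSpace_coe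
    haveI : Nonempty (closedBall y₀ ρ) := ⟨⟨y₀, mem_closedBall_self hρ.le⟩⟩
    set Ψ : closedBall y₀ ρ → closedBall y₀ ρ := fun y => ⟨Φ y, hmaps y.2⟩ with hΨ
    have hcontr : ContractingWith (1/2 : NNReal) Ψ := by
      constructor
      · rw [← NNReal.coe_lt_coe]; norm_num
      · apply LipschitzWith.of_dist_le_mul
        intro a b
        rw [Subtype.dist_eq, Subtype.dist_eq, dist_eq_norm, dist_eq_norm]
        have hc : ((1/2 : NNReal) : ℝ) = (1/2 : ℝ) := by norm_num
        rw [hc]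
        exact hlip a a.2 b b.2
    set y' : closedBall y₀ ρ := ContractingWith.fixedPoint Ψ hcontr with hy'
    have hy'fix : Ψ y' = y' := hcontr.fixedPoint_isFixedPt
    have hΦfix : Φ (y' : EuclideanSpace ℝ (Fin m)) = (y' : EuclideanSpace ℝ (Fin m)) :=
      congrArg Subtype.val hy'fix
    refine ⟨(y' : EuclideanSpace ℝ (Fin m)), y'.2, ?_, ?_⟩
    · have h2 : A.symm (F (x, (y' : EuclideanSpace ℝ (Fin m)))) = 0 := by
        have := hΦfix
        rw [hΦdef] at this
        exact sub_eq_self.mp this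
      exact (A.symm.map_eq_zero_iff).mp h2
    · intro y₁ h1 hF1
      have hfix1 : Φ y₁ = y₁ := by simp [hΦdef, hF1]
      have h5 := hlip y₁ h1 (y' : EuclideanSpace ℝ (Fin m)) y'.2
      rw [hfix1, hΦfix] at h5
      have hn : ‖y₁ - (y' : EuclideanSpace ℝ (Fin m))‖ = 0 := by
        linarith [norm_nonneg (y₁ - (y' : EuclideanSpace ℝ (Fin m)))]
      exact sub_eq_zero.mp (norm_eq_zero.mp hn)
  -- define the implicit function
  set f : EuclideanSpace ℝ (Fin n) → EuclideanSpace ℝ (Fin m) :=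
    fun x => if h : x ∈ ball x₀ r then (key x h).choose else y₀ with hfdef
  have hfmem : ∀ x (h : x ∈ ball x₀ r), f x ∈ closedBall y₀ ρ ∧ F (x, f x) = 0 ∧
      ∀ y' ∈ closedBall y₀ ρ, F (x, y') = 0 → y' = f x := by
    intro x h
    have hfx : f x = (key x h).choose := by rw [hfdef]; exact dif_pos h
    rw [hfx]
    exact (key x h).choose_spec
  refine ⟨f, ⟨?_, fun x hx => (hfmem x hx).1, ?_⟩, ?_⟩
  · have hx₀ : x₀ ∈ ball x₀ r := mem_ball_self hrpos
    exact ((hfmem x₀ hx₀).2.2 y₀ (mem_closedBall_self hρ.le) hF0).symm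
  · intro x hx y hy
    constructor
    · exact fun h0 => (hfmem x hx).2.2 y hy h0
    · intro he; rw [he]; exact (hfmem x hx).2.1
  · rintro g ⟨hg0, hgmem, hgiff⟩ x hx
    have h1 : F (x, g x) = 0 := (hgiff x hx (g x) (hgmem x hx)).mpr rfl
    exact (hfmem x hx).2.2 (g x) (hgmem x hx) h1
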